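/- With x₀ = a, x₁ = b positive integers with a > b, and x_n defined as the remainder of x_{n−2} modulo x_{n−1}, if |a/b − φ| < |F_{k+2}/F_{k+1} − φ| then for all 1 ≤ n ≤ k one has x_n = (−1)ⁿ·a·F_{n−1} + (−1)^{n+1}·b·F_n. -/

import Mathlib

lemma fib_gold (n : ℕ) :
    (Nat.fib (n+1) : ℝ) - (1 + Real.sqrt 5)/2 * Nat.fib n = ((1 - Real.sqrt 5)/2)^n := by
  induction n with
  | zero => simp
  | succ n ih =>
    have h5 : Real.sqrt 5 ^ 2 = 5 := Real.sq_sqrt (by norm_num)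
    rw [Nat.fib_add_two, pow_succ]
    push_cast
    linear_combination ((1 - Real.sqrt 5)/2) * ih - (Nat.fib n : ℝ)/4 * h5

lemma key (a b k : ℕ) (hb : 0 < b)
    (h : |(a : ℝ) / (b : ℝ) - (1 + Real.sqrt 5) / 2| <
      |(Nat.fib (k + 2) : ℝ) / (Nat.fib (k + 1) : ℝ) - (1 + Real.sqrt 5) / 2|) :
    ∀ j, 1 ≤ j → j ≤ k →
      0 < (-1:ℤ)^(j+1) * ((a:ℤ) * Nat.fib j - (b:ℤ) * Nat.fib (j+1)) := by
  intro j hj1 hjk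
  have hs2 : Real.sqrt 5 ^ 2 = 5 := Real.sq_sqrt (by norm_num)
  have hs0 : (0:ℝ) < Real.sqrt 5 := Real.sqrt_pos.mpr (by norm_num)
  have hfg := fib_gold j
  have hfgk : (Nat.fib (k+2) : ℝ) - (1 + Real.sqrt 5)/2 * Nat.fib (k+1)
      = ((1 - Real.sqrt 5)/2)^(k+1) := by
    have := fib_gold (k+1); norm_num at this ⊢; convert this using 3
  set s := Real.sqrt 5 with hsdef
  clear_value s
  have hq0 : (0:ℝ) < (s-1)/2 := by nlinarith
  have hq1 : (s-1)/2 < 1 := by nlinarith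
  set q : ℝ := (s-1)/2 with hq
  clear_value q
  have hb0 : (0:ℝ) < b := by exact_mod_cast hb
  have hfibk : (0:ℝ) < (Nat.fib (k+1) : ℝ) := by
    exact_mod_cast Nat.fib_pos.mpr k.succ_pos
  have hfibj : (0:ℝ) < (Nat.fib j : ℝ) := by
    exact_mod_cast Nat.fib_pos.mpr hj1
  have hfible : (Nat.fib j : ℝ) ≤ (Nat.fib (k+1) : ℝ) := by
    exact_mod_cast Nat.fib_mono (by omega : j ≤ k+1)
  set δ : ℝ := (a:ℝ)/b - (1+s)/2 with hδ
  clear_value δ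
  -- rewrite the RHS of h
  have e1 : (Nat.fib (k+2):ℝ)/(Nat.fib (k+1):ℝ) - (1+s)/2
      = ((1-s)/2)^(k+1) / (Nat.fib (k+1):ℝ) := by
    rw [← hfgk, sub_div, mul_div_cancel_right₀ _ hfibk.ne']
  have e2 : |((1-s)/2)^(k+1) / (Nat.fib (k+1):ℝ)| = q^(k+1) / (Nat.fib (k+1):ℝ) := by
    rw [abs_div, abs_pow, abs_of_pos hfibk,
      show |(1-s)/2| = q by rw [abs_of_neg (by linarith : (1-s)/2 < 0), hq]; ring]
  have h' : |δ| < q^(k+1) / (Nat.fib (k+1):ℝ) := by rwa [e1, e2] at h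
  have hδk : |δ| * (Nat.fib (k+1):ℝ) < q^(k+1) := (lt_div_iff₀ hfibk).mp h'
  have hqle : q^(k+1) ≤ q^j := pow_le_pow_of_le_one hq0.le hq1.le (by omega)
  have key1 : |δ| * (Nat.fib j : ℝ) < q^j := by
    nlinarith [abs_nonneg δ, pow_pos hq0 j]
  -- cast goal to ℝ
  suffices hR : (0:ℝ) < (-1)^(j+1) * ((a:ℝ) * Nat.fib j - (b:ℝ) * Nat.fib (j+1)) by
    exact_mod_cast hR
  have hbd : (b:ℝ) * δ = a - b*((1+s)/2) := by
    rw [hδ]; field_simp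
  rcases Nat.even_or_odd j with he | ho
  · have h1 : ((1-s)/2)^j = q^j := by
      rw [show (1-s)/2 = -q by rw [hq]; ring, he.neg_pow]
    have h2 : (-1:ℝ)^(j+1) = -1 := (he.add_one).neg_one_pow
    rw [h2]
    have h3 : δ * (Nat.fib j:ℝ) < q^j :=
      lt_of_le_of_lt (mul_le_mul_of_nonneg_right (le_abs_self δ) hfibj.le) key1
    have h4 : (b:ℝ) * (δ * Nat.fib j) < b * q^j := mul_lt_mul_of_pos_left h3 hb0
    have h5 : (b:ℝ)*δ*(Nat.fib j:ℝ) = (a - b*((1+s)/2))*(Nat.fib j:ℝ) := by rw [hbd]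
    have h6 : (Nat.fib (j+1):ℝ) = (1+s)/2 * Nat.fib j + q^j := by
      rw [← h1]; linarith [hfg]
    have h7 : (b:ℝ) * (Nat.fib (j+1):ℝ) = b*((1+s)/2 * Nat.fib j + q^j) := by rw [h6]
    linarith [h4, h5, h7]
  · have h1 : ((1-s)/2)^j = -q^j := by
      rw [show (1-s)/2 = -q by rw [hq]; ring, ho.neg_pow]
    have h2 : (-1:ℝ)^(j+1) = 1 := (ho.add_one).neg_one_pow
    rw [h2]
    have h3 : -(q^j) < δ * (Nat.fib j:ℝ) := by
      linarith [mul_le_mul_of_nonneg_right (neg_abs_le δ) hfibj.le, key1]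
    have h4 : (b:ℝ) * (-(q^j)) < b * (δ * Nat.fib j) := mul_lt_mul_of_pos_left h3 hb0
    have h5 : (b:ℝ)*δ*(Nat.fib j:ℝ) = (a - b*((1+s)/2))*(Nat.fib j:ℝ) := by rw [hbd]
    have h6 : (Nat.fib (j+1):ℝ) = (1+s)/2 * Nat.fib j - q^j := by
      linarith [hfg, h1]
    have h7 : (b:ℝ) * (Nat.fib (j+1):ℝ) = b*((1+s)/2 * Nat.fib j - q^j) := by rw [h6]
    linarith [h4, h5, h7]

/-- For the remainder sequence `x 0 = a`, `x 1 = b`, `x (n+2) = x n % x (n+1)` of the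
Euclidean algorithm: if `a / b` is closer to the golden ratio than `F (k+2) / F (k+1)`,
then `x n = (-1)ⁿ a F (n-1) + (-1)^(n+1) b F n` for all `1 ≤ n ≤ k`. -/
theorem stmt6 (a b k : ℕ) (hb : 0 < b) (hab : b < a) (x : ℕ → ℕ)
    (hx0 : x 0 = a) (hx1 : x 1 = b) (hx : ∀ n, x (n + 2) = x n % x (n + 1))
    (h : |(a : ℝ) / (b : ℝ) - (1 + Real.sqrt 5) / 2| <
      |(Nat.fib (k + 2) : ℝ) / (Nat.fib (k + 1) : ℝ) - (1 + Real.sqrt 5) / 2|) :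
    ∀ n, 1 ≤ n → n ≤ k →
      (x n : ℤ) = (-1) ^ n * (a : ℤ) * (Nat.fib (n - 1) : ℤ) +
        (-1) ^ (n + 1) * (b : ℤ) * (Nat.fib n : ℤ) := by
  have K := key a b k hb h
  have aux : ∀ j : ℕ,
      (j+1 ≤ k → (x (j+1) : ℤ) = (-1)^(j+1) * ((a:ℤ) * Nat.fib j - (b:ℤ) * Nat.fib (j+1)))
      ∧ (j+2 ≤ k → (x (j+2) : ℤ) = (-1)^(j+2) * ((a:ℤ) * Nat.fib (j+1) - (b:ℤ) * Nat.fib (j+2))) := by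
    intro j
    induction j with
    | zero =>
      constructor
      · intro _
        simp [hx1]
      · intro h2
        have hK : (0:ℤ) < (-1)^3 * ((a:ℤ) * Nat.fib 2 - (b:ℤ) * Nat.fib 3) :=
          K 2 (by norm_num) h2
        have hf2 : Nat.fib 2 = 1 := rfl
        have hf3 : Nat.fib 3 = 2 := rfl
        rw [hf2, hf3] at hK
        have ha2b : a < 2*b := by push_cast at hK; omega
        have hx2 : x 2 = a - b := by
          rw [hx 0, hx0, hx1, Nat.mod_eq_sub_mod hab.le, Nat.mod_eq_of_lt (by omega)]
        rw [hx2, Nat.fib_one, hf2]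
        push_cast [hab.le]
        ring
    | succ j ih =>
      refine ⟨ih.2, ?_⟩
      show j+3 ≤ k → (x (j+3) : ℤ)
          = (-1)^(j+3) * ((a:ℤ) * Nat.fib (j+2) - (b:ℤ) * Nat.fib (j+3))
      intro h3
      have p1 := ih.1 (by omega)
      have p2 := ih.2 (by omega)
      have K1 : (0:ℤ) < (-1)^(j+2) * ((a:ℤ) * Nat.fib (j+1) - (b:ℤ) * Nat.fib (j+2)) :=
        K (j+1) (by omega) (by omega)
      have K2 : (0:ℤ) < (-1)^(j+3) * ((a:ℤ) * Nat.fib (j+2) - (b:ℤ) * Nat.fib (j+3)) :=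
        K (j+2) (by omega) (by omega)
      have K3 : (0:ℤ) < (-1)^(j+4) * ((a:ℤ) * Nat.fib (j+3) - (b:ℤ) * Nat.fib (j+4)) :=
        K (j+3) (by omega) (by omega)
      have hrec2 : (-1:ℤ)^(j+3) * ((a:ℤ) * Nat.fib (j+2) - (b:ℤ) * Nat.fib (j+3))
          = (-1)^(j+1) * ((a:ℤ) * Nat.fib j - (b:ℤ) * Nat.fib (j+1))
            - (-1)^(j+2) * ((a:ℤ) * Nat.fib (j+1) - (b:ℤ) * Nat.fib (j+2)) := by
        rw [show Nat.fib (j+3) = Nat.fib (j+1) + Nat.fib (j+2) from Nat.fib_add_two,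
          show Nat.fib (j+2) = Nat.fib j + Nat.fib (j+1) from Nat.fib_add_two]
        push_cast
        ring
      have hrec3 : (-1:ℤ)^(j+4) * ((a:ℤ) * Nat.fib (j+3) - (b:ℤ) * Nat.fib (j+4))
          = (-1)^(j+2) * ((a:ℤ) * Nat.fib (j+1) - (b:ℤ) * Nat.fib (j+2))
            - (-1)^(j+3) * ((a:ℤ) * Nat.fib (j+2) - (b:ℤ) * Nat.fib (j+3)) := by
        rw [show Nat.fib (j+4) = Nat.fib (j+2) + Nat.fib (j+3) from Nat.fib_add_two,
          show Nat.fib (j+3) = Nat.fib (j+1) + Nat.fib (j+2) from Nat.fib_add_two]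
        push_cast
        ring
      have hd2 : (x (j+1) : ℤ) - (x (j+2) : ℤ)
          = (-1)^(j+3) * ((a:ℤ) * Nat.fib (j+2) - (b:ℤ) * Nat.fib (j+3)) := by
        rw [p1, p2]; exact hrec2.symm
      have A : (0:ℤ) < (x (j+1) : ℤ) - (x (j+2) : ℤ) := by rw [hd2]; exact K2
      have B : (x (j+1) : ℤ) - (x (j+2) : ℤ) < (x (j+2) : ℤ) := by
        rw [hd2, p2]
        exact sub_pos.mp (hrec3 ▸ K3)
      have hpos2 : 0 < x (j+2) := by
        have : (0:ℤ) < (x (j+2) : ℤ) := by rw [p2]; exact K1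
        exact_mod_cast this
      have hle : x (j+2) ≤ x (j+1) := by omega
      have hmod : x (j+1) % x (j+2) = x (j+1) - x (j+2) := by
        rw [Nat.mod_eq_sub_mod hle]
        exact Nat.mod_eq_of_lt (by omega)
      rw [show x (j+3) = x (j+1) % x (j+2) from hx (j+1), hmod,
        show ((x (j+1) - x (j+2) : ℕ) : ℤ) = (x (j+1) : ℤ) - (x (j+2) : ℤ) by omega, hd2]
  intro n h1 h2
  obtain ⟨j, rfl⟩ : ∃ j, n = j+1 := ⟨n-1, by omega⟩
  rw [show j+1-1 = j from rfl, (aux j).1 h2]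
  ring
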